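/- The total energy function E(ρ, m, S) = (1/2)|m|²/ρ + (a/(γ−1)) ρ^γ exp((γ−1) S/ρ) (extended as above) is lower semicontinuous on ℝ^{d+2}. -/

import Mathlib

open scoped ENNReal
open Classical
open Topology Filter

open Filter Topology in
private lemma auxTendsto_rpow_exp (γ c : ℝ) (hc : 0 < c) :
    Tendsto (fun t : ℝ => t ^ γ * Real.exp (c / t)) (𝓝[>] 0) atTop := by
  have h1 : Tendsto (fun u : ℝ => c ^ γ * (Real.exp u / u ^ γ)) atTop atTop :=
    (tendsto_exp_div_rpow_atTop γ).const_mul_atTop (Real.rpow_pos_of_pos hc γ)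
  have h2 : Tendsto (fun t : ℝ => c / t) (𝓝[>] 0) atTop := by
    simpa [div_eq_mul_inv] using tendsto_inv_nhdsGT_zero.const_mul_atTop hc
  refine (h1.comp h2).congr' ?_
  filter_upwards [self_mem_nhdsWithin] with t (ht : 0 < t)
  have hct : 0 < c / t := div_pos hc ht
  simp only [Function.comp]
  rw [Real.div_rpow hc.le ht.le]
  field_simp

/-- The total energy of the Euler system, as an extended-real-valued function of
`(ρ, m, S)`. -/
noncomputable def totalEnergy (a γ : ℝ) (d : ℕ)
    (p : ℝ × (EuclideanSpace ℝ (Fin d)) × ℝ) : ℝ≥0∞ :=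
  if 0 < p.1 then
    ENNReal.ofReal ((1 / 2) * ‖p.2.1‖ ^ 2 / p.1 +
      a / (γ - 1) * p.1 ^ γ * Real.exp ((γ - 1) * p.2.2 / p.1))
  else if p.1 = 0 ∧ p.2.1 = 0 ∧ p.2.2 ≤ 0 then 0 else ⊤

set_option maxHeartbeats 1000000 in
/-- The total energy is lower semicontinuous on `ℝ^{d+2}`. -/
theorem totalEnergy_lowerSemicontinuous (a γ : ℝ) (ha : 0 < a) (hγ : 1 < γ)
    (d : ℕ) (hd : 1 ≤ d) :
    LowerSemicontinuous (totalEnergy a γ d) := by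
  have hγ1 : (0:ℝ) < γ - 1 := by linarith
  set E := EuclideanSpace ℝ (Fin d)
  -- the real-valued energy on {ρ > 0}
  set g : ℝ × E × ℝ → ℝ := fun p =>
    (1 / 2) * ‖p.2.1‖ ^ 2 / p.1 + a / (γ - 1) * p.1 ^ γ * Real.exp ((γ - 1) * p.2.2 / p.1)
    with hg_def
  rintro ⟨ρ, m, S⟩
  have hcont_fst : Continuous fun p : ℝ × E × ℝ => p.1 := continuous_fst
  have hcont_m : Continuous fun p : ℝ × E × ℝ => p.2.1 := continuous_fst.comp continuous_snd
  have hcont_S : Continuous fun p : ℝ × E × ℝ => p.2.2 := continuous_snd.comp continuous_snd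
  rcases lt_trichotomy 0 ρ with hρ | hρ | hρ
  · -- positive density: the energy is continuous there
    apply ContinuousAt.lowerSemicontinuousAt
    have hne : ((ρ, m, S) : ℝ × E × ℝ).1 ≠ 0 := ne_of_gt hρ
    have hgc : ContinuousAt g (ρ, m, S) := by
      apply ContinuousAt.add
      · exact (continuousAt_const.mul
          (((hcont_m.norm).pow 2).continuousAt)).div hcont_fst.continuousAt hne
      · exact ((continuousAt_const.mul
          (hcont_fst.continuousAt.rpow_const (Or.inl hne))).mul
          (Real.continuous_exp.continuousAt.comp
            ((continuousAt_const.mul hcont_S.continuousAt).div hcont_fst.continuousAt hne)))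
    have heq : (fun p => ENNReal.ofReal (g p)) =ᶠ[𝓝 ((ρ, m, S) : ℝ × E × ℝ)]
        totalEnergy a γ d := by
      have hopen : ∀ᶠ p : ℝ × E × ℝ in 𝓝 (ρ, m, S), 0 < p.1 :=
        hcont_fst.continuousAt.eventually_const_lt hρ
      filter_upwards [hopen] with p hp
      simp [totalEnergy, hp, g]
    exact (ENNReal.continuous_ofReal.continuousAt.comp hgc).congr heq
  · -- zero density
    have hρ0 : ρ = 0 := hρ.symm
    subst hρ0
    by_cases h0 : m = 0 ∧ S ≤ 0
    · -- energy is 0, nothing below it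
      intro y hy
      have hfx : totalEnergy a γ d ((0:ℝ), m, S) = 0 := by
        simp [totalEnergy, h0.1, h0.2]
      rw [hfx] at hy
      exact absurd hy (by simp)
    · -- energy is ⊤
      intro y hy
      have hfx : totalEnergy a γ d ((0:ℝ), m, S) = ⊤ := by
        rw [totalEnergy, if_neg (lt_irrefl 0), if_neg]
        rintro ⟨-, h1, h2⟩
        exact h0 ⟨h1, h2⟩
      rw [hfx] at hy
      set T : ℝ := max y.toReal 0 + 1 with hT_def
      have hTy : y.toReal < T := by
        have := le_max_left y.toReal 0
        simp only [hT_def]; linarith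
      have hT0 : 0 < T := by
        have := le_max_right y.toReal 0
        simp only [hT_def]; linarith
      by_cases hm : m = 0
      · -- then S > 0 : the thermal term blows up
        have hS : 0 < S := by
          by_contra hS
          exact h0 ⟨hm, not_lt.mp hS⟩
        set s : ℝ := S / 2 with hs_def
        have hs : 0 < s := by positivity
        have hsS : s < S := by simp only [hs_def]; linarith
        have hc : 0 < (γ - 1) * s := by positivity
        have haγ : 0 < a / (γ - 1) := by positivity
        have htend : Filter.Tendsto
            (fun t : ℝ => a / (γ - 1) * (t ^ γ * Real.exp ((γ - 1) * s / t)))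
            (𝓝[>] 0) Filter.atTop :=
          (auxTendsto_rpow_exp γ _ hc).const_mul_atTop haγ
        have hev : ∀ᶠ t in 𝓝[>] (0:ℝ),
            T < a / (γ - 1) * (t ^ γ * Real.exp ((γ - 1) * s / t)) :=
          htend.eventually (Filter.eventually_gt_atTop T)
        rw [eventually_nhdsWithin_iff] at hev
        obtain ⟨δ, hδ0, hδ⟩ := Metric.eventually_nhds_iff.mp hev
        have h1 : ∀ᶠ p : ℝ × E × ℝ in 𝓝 ((0:ℝ), m, S), p.1 < δ :=
          hcont_fst.continuousAt.eventually_lt_const hδ0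
        have h3 : ∀ᶠ p : ℝ × E × ℝ in 𝓝 ((0:ℝ), m, S), s < p.2.2 :=
          hcont_S.continuousAt.eventually_const_lt hsS
        filter_upwards [h1, h3] with p hp1 hp3
        change p.1 < δ at hp1
        change s < p.2.2 at hp3
        rcases lt_trichotomy 0 p.1 with h | h | h
        · have hB : T < a / (γ - 1) * (p.1 ^ γ * Real.exp ((γ - 1) * s / p.1)) := by
            apply hδ
            · rw [Real.dist_eq, sub_zero, abs_of_pos h]; exact hp1
            · exact h
          have hBB : a / (γ - 1) * (p.1 ^ γ * Real.exp ((γ - 1) * s / p.1)) ≤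
              a / (γ - 1) * p.1 ^ γ * Real.exp ((γ - 1) * p.2.2 / p.1) := by
            rw [mul_assoc]
            have hX : 0 < p.1 ^ γ := Real.rpow_pos_of_pos h γ
            have hexp : Real.exp ((γ - 1) * s / p.1) ≤ Real.exp ((γ - 1) * p.2.2 / p.1) := by
              apply Real.exp_le_exp.mpr
              apply (div_le_div_iff_of_pos_right h).mpr
              nlinarith
            exact mul_le_mul_of_nonneg_left (mul_le_mul_of_nonneg_left hexp hX.le) haγ.le
          have hA : 0 ≤ (1 / 2) * ‖p.2.1‖ ^ 2 / p.1 := by positivity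
          have hval : totalEnergy a γ d p = ENNReal.ofReal (g p) := by
            simp [totalEnergy, h, hg_def]
          rw [hval, gt_iff_lt, ENNReal.lt_ofReal_iff_toReal_lt hy.ne]
          simp only [hg_def]
          nlinarith [hB, hBB]
        · have : totalEnergy a γ d p = ⊤ := by
            rw [totalEnergy, if_neg (by rw [← h]; exact lt_irrefl 0), if_neg]
            rintro ⟨-, -, h2⟩
            exact absurd h2 (not_le.mpr (hs.trans hp3))
          rw [this]; exact hy
        · have : totalEnergy a γ d p = ⊤ := by
            simp [totalEnergy, not_lt.mpr h.le, ne_of_lt h]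
          rw [this]; exact hy
      · -- m ≠ 0 : the kinetic term blows up
        have hm0 : 0 < ‖m‖ := norm_pos_iff.mpr hm
        set c : ℝ := ‖m‖ / 2 with hc_def
        have hc : 0 < c := by positivity
        have hcm : c < ‖m‖ := by simp only [hc_def]; linarith
        set δ : ℝ := (1 / 2 * c ^ 2) / T with hδ_def
        have hδ0 : 0 < δ := by positivity
        have hδT : 1 / 2 * c ^ 2 / δ = T := by
          rw [hδ_def, div_div_eq_mul_div, mul_comm, mul_div_assoc,
            div_self (ne_of_gt (by positivity : (0:ℝ) < 1 / 2 * c ^ 2)), mul_one]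
        have h1 : ∀ᶠ p : ℝ × E × ℝ in 𝓝 ((0:ℝ), m, S), p.1 < δ :=
          hcont_fst.continuousAt.eventually_lt_const hδ0
        have h2 : ∀ᶠ p : ℝ × E × ℝ in 𝓝 ((0:ℝ), m, S), c < ‖p.2.1‖ :=
          (hcont_m.norm.continuousAt).eventually_const_lt hcm
        filter_upwards [h1, h2] with p hp1 hp2
        change p.1 < δ at hp1
        change c < ‖p.2.1‖ at hp2
        rcases lt_trichotomy 0 p.1 with h | h | h
        · have hA : T < (1 / 2) * ‖p.2.1‖ ^ 2 / p.1 := by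
            have hsq : c ^ 2 < ‖p.2.1‖ ^ 2 := by nlinarith
            calc T = 1 / 2 * c ^ 2 / δ := hδT.symm
              _ ≤ 1 / 2 * c ^ 2 / p.1 := by
                  apply div_le_div_of_nonneg_left (by positivity) h hp1.le
              _ < 1 / 2 * ‖p.2.1‖ ^ 2 / p.1 := by
                  apply div_lt_div_of_pos_right ?_ h
                  nlinarith
          have hB : 0 ≤ a / (γ - 1) * p.1 ^ γ * Real.exp ((γ - 1) * p.2.2 / p.1) := by
            have := Real.rpow_pos_of_pos h γ
            positivity
          have hval : totalEnergy a γ d p = ENNReal.ofReal (g p) := by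
            simp [totalEnergy, h, hg_def]
          rw [hval, gt_iff_lt, ENNReal.lt_ofReal_iff_toReal_lt hy.ne]
          simp only [hg_def]
          nlinarith [hA, hB]
        · have : totalEnergy a γ d p = ⊤ := by
            rw [totalEnergy, if_neg (by rw [← h]; exact lt_irrefl 0), if_neg]
            rintro ⟨-, h1', -⟩
            rw [h1', norm_zero] at hp2
            linarith
          rw [this]; exact hy
        · have : totalEnergy a γ d p = ⊤ := by
            simp [totalEnergy, not_lt.mpr h.le, ne_of_lt h]
          rw [this]; exact hy
  · -- negative density
    intro y hy
    have hfx : totalEnergy a γ d (ρ, m, S) = ⊤ := by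
      simp [totalEnergy, not_lt.mpr hρ.le, ne_of_lt hρ]
    rw [hfx] at hy
    have h1 : ∀ᶠ p : ℝ × E × ℝ in 𝓝 (ρ, m, S), p.1 < 0 :=
      hcont_fst.continuousAt.eventually_lt_const hρ
    filter_upwards [h1] with p hp
    change p.1 < 0 at hp
    have : totalEnergy a γ d p = ⊤ := by
      simp [totalEnergy, not_lt.mpr hp.le, ne_of_lt hp]
    rw [this]; exact hy
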